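/- Let a > 0 and k ∈ ℕ, and let f_k^{(a)}(x) = e^{−a/2} √(a^{x+k}/(x!·k!)) · C_k^{(a)}(x) be the k-th Charlier function. Then for every z ∈ ℂ, Σ_{x∈ℕ} f_k^{(a)}(x) z^x/√(x!) = e^{√a·z − a/2} (√a − z)^k/√(k!). In particular, the Charlier transform maps the Charlier functions to polynomials in z times a fixed nonvanishing entire function. -/

import Mathlib

open Real Nat

/-- The Charlier polynomial of parameter `a > 0`:
`C_k^{(a)}(x) = Σ_{j=0}^{k} binom(k,j)·binom(x,j)·j!·(−1/a)^j` for `x ∈ ℕ`. -/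
noncomputable def charlier (a : ℝ) (k x : ℕ) : ℝ :=
  ∑ j ∈ Finset.range (k + 1),
    (k.choose j : ℝ) * (x.choose j : ℝ) * (j ! : ℝ) * (-1 / a) ^ j

/-- The `k`-th Charlier function `f_k^{(a)}(x) = e^{−a/2} √(a^{x+k}/(x!·k!)) · C_k^{(a)}(x)`. -/
noncomputable def charlierFun (a : ℝ) (k x : ℕ) : ℝ :=
  Real.exp (-a / 2) * Real.sqrt (a ^ (x + k) / ((x ! : ℝ) * (k ! : ℝ))) * charlier a k x

lemma charlier_aux (w : ℂ) (j : ℕ) :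
    HasSum (fun x : ℕ => (x.choose j : ℂ) * w ^ x / x !) (w ^ j / j ! * Complex.exp w) := by
  have hexp : HasSum (fun n : ℕ => w ^ n / n !) (Complex.exp w) := by
    rw [Complex.exp_eq_exp_ℂ]
    exact NormedSpace.expSeries_div_hasSum_exp (𝔸 := ℂ) w
  have h2 : HasSum (fun n : ℕ => ((n + j).choose j : ℂ) * w ^ (n + j) / (n + j)!)
      (w ^ j / j ! * Complex.exp w) := by
    refine (hexp.mul_left (w ^ j / j !)).congr_fun fun n => ?_
    have hc' : ((n + j).choose j : ℂ) * n ! * j ! = ((n + j)! : ℂ) := by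
      exact_mod_cast congrArg (Nat.cast : ℕ → ℂ) (Nat.add_choose_mul_factorial_mul_factorial n j)
    have hn : (n ! : ℂ) ≠ 0 := Nat.cast_ne_zero.2 n.factorial_ne_zero
    have hj : (j ! : ℂ) ≠ 0 := Nat.cast_ne_zero.2 j.factorial_ne_zero
    rw [← hc', pow_add]
    have hch : ((n + j).choose j : ℂ) ≠ 0 :=
      Nat.cast_ne_zero.2 (Nat.choose_pos (Nat.le_add_left j n)).ne'
    field_simp
  have h0 : ∑ i ∈ Finset.range j, (i.choose j : ℂ) * w ^ i / i ! = 0 :=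
    Finset.sum_eq_zero fun i hi => by
      simp [Nat.choose_eq_zero_of_lt (Finset.mem_range.1 hi)]
  refine (hasSum_nat_add_iff' (f := fun x : ℕ => (x.choose j : ℂ) * w ^ x / x !) j).1 ?_
  rw [h0, sub_zero]
  exact h2

/-- The Charlier transform of the `k`-th Charlier function:
`Σ_{x∈ℕ} f_k^{(a)}(x) z^x/√(x!) = e^{√a·z − a/2} (√a − z)^k/√(k!)` for all `z ∈ ℂ`. -/
theorem charlierTransform_charlierFun (a : ℝ) (ha : 0 < a) (k : ℕ) (z : ℂ) :
    HasSum (fun x : ℕ => ((charlierFun a k x : ℝ) : ℂ) * z ^ x / ((Real.sqrt (x ! : ℝ) : ℝ) : ℂ))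
      (Complex.exp ((Real.sqrt a : ℂ) * z - (a : ℂ) / 2) * ((Real.sqrt a : ℂ) - z) ^ k /
        ((Real.sqrt (k ! : ℝ) : ℝ) : ℂ)) := by
  set s : ℂ := ((Real.sqrt a : ℝ) : ℂ) with hs
  set w : ℂ := s * z with hw
  set c : ℕ → ℂ := fun j =>
    ((Real.exp (-a / 2) : ℝ) : ℂ) / ((Real.sqrt (k ! : ℝ) : ℝ) : ℂ) * s ^ k *
      (k.choose j : ℂ) * (j ! : ℂ) * (((-1 / a : ℝ) : ℝ) : ℂ) ^ j with hc
  have key : HasSum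
      (fun x : ℕ => ∑ j ∈ Finset.range (k + 1), c j * ((x.choose j : ℂ) * w ^ x / x !))
      (∑ j ∈ Finset.range (k + 1), c j * (w ^ j / j ! * Complex.exp w)) :=
    hasSum_sum fun j _ => (charlier_aux w j).mul_left (c j)
  have hsk : ((Real.sqrt (k ! : ℝ) : ℝ) : ℂ) ≠ 0 := by
    exact_mod_cast (Real.sqrt_pos.2 (by positivity : (0:ℝ) < (k ! : ℝ))).ne'
  have hss : s * s = (a : ℂ) := by
    rw [hs]; exact_mod_cast congrArg (Complex.ofReal) (Real.mul_self_sqrt ha.le)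
  -- pointwise equality
  have hfun : ∀ x : ℕ,
      ((charlierFun a k x : ℝ) : ℂ) * z ^ x / ((Real.sqrt (x ! : ℝ) : ℝ) : ℂ)
        = ∑ j ∈ Finset.range (k + 1), c j * ((x.choose j : ℂ) * w ^ x / x !) := by
    intro x
    have hxf : (0:ℝ) < (x ! : ℝ) := by positivity
    have hsx : ((Real.sqrt (x ! : ℝ) : ℝ) : ℂ) ≠ 0 := by
      exact_mod_cast (Real.sqrt_pos.2 hxf).ne'
    have hsx2 : ((Real.sqrt (x ! : ℝ) : ℝ) : ℂ) * ((Real.sqrt (x ! : ℝ) : ℝ) : ℂ) = (x ! : ℂ) := by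
      exact_mod_cast congrArg Complex.ofReal (Real.mul_self_sqrt hxf.le)
    have hpow : Real.sqrt (a ^ (x + k)) = Real.sqrt a ^ (x + k) := by
      rw [show a ^ (x + k) = (Real.sqrt a ^ (x + k)) ^ 2 by
        rw [← pow_mul, mul_comm, pow_mul, Real.sq_sqrt ha.le]]
      exact Real.sqrt_sq (by positivity)
    have hsqrt : Real.sqrt (a ^ (x + k) / ((x ! : ℝ) * (k ! : ℝ)))
        = Real.sqrt a ^ (x + k) / (Real.sqrt (x ! : ℝ) * Real.sqrt (k ! : ℝ)) := by
      rw [Real.sqrt_div (by positivity), Real.sqrt_mul (by positivity), hpow]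
    rw [charlierFun, charlier, hsqrt]
    push_cast
    rw [Finset.mul_sum, Finset.sum_mul, Finset.sum_div]
    refine Finset.sum_congr rfl fun j _ => ?_
    have hxc : (x ! : ℂ) ≠ 0 := Nat.cast_ne_zero.2 x.factorial_ne_zero
    rw [hc]
    simp only [Complex.ofReal_exp, Complex.ofReal_div, Complex.ofReal_neg, Complex.ofReal_one,
      Complex.ofReal_ofNat]
    field_simp
    rw [← hsx2, pow_add, mul_pow]
    ring
  -- total equality
  have htot : (∑ j ∈ Finset.range (k + 1), c j * (w ^ j / j ! * Complex.exp w))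
      = Complex.exp (s * z - (a : ℂ) / 2) * (s - z) ^ k / ((Real.sqrt (k ! : ℝ) : ℝ) : ℂ) := by
    have hexp : ((Real.exp (-a / 2) : ℝ) : ℂ) * Complex.exp w
        = Complex.exp (s * z - (a : ℂ) / 2) := by
      rw [Complex.ofReal_exp, ← Complex.exp_add, hw]
      push_cast
      ring_nf
    have hjs : ∀ j ∈ Finset.range (k + 1),
        c j * (w ^ j / j ! * Complex.exp w)
          = ((Real.exp (-a / 2) : ℝ) : ℂ) * Complex.exp w / ((Real.sqrt (k ! : ℝ) : ℝ) : ℂ) *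
            ((((-1 / a : ℝ) : ℂ) * w) ^ j * 1 ^ (k - j) * (k.choose j : ℂ) * s ^ k) := by
      intro j _
      have hjf : (j ! : ℂ) ≠ 0 := Nat.cast_ne_zero.2 j.factorial_ne_zero
      calc c j * (w ^ j / j ! * Complex.exp w)
          = (((Real.exp (-a / 2) : ℝ) : ℂ) * Complex.exp w / ((Real.sqrt (k ! : ℝ) : ℝ) : ℂ) *
              ((((-1 / a : ℝ) : ℂ) * w) ^ j * 1 ^ (k - j) * (k.choose j : ℂ) * s ^ k)) *
            ((j ! : ℂ) / (j ! : ℂ)) := by rw [hc, mul_pow]; ring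
        _ = _ := by rw [div_self hjf, mul_one]
    rw [Finset.sum_congr rfl hjs, ← Finset.mul_sum]
    have hbin : ∑ j ∈ Finset.range (k + 1),
        ((((-1 / a : ℝ) : ℂ) * w) ^ j * 1 ^ (k - j) * (k.choose j : ℂ) * s ^ k)
        = (s - z) ^ k := by
      rw [← Finset.sum_mul, ← add_pow, ← mul_pow]
      congr 1
      have haC : (a : ℂ) ≠ 0 := by exact_mod_cast ha.ne'
      rw [hw]
      push_cast
      field_simp
      rw [← hss]
      ring
    rw [hbin, hexp]
    ring
  rw [funext hfun, ← htot]
  exact key
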